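/- With g: [0,1]² → [0,1]² as defined (sieving map with central part of relative length p sent to s₂ = (1/2,1) and outer parts stretched linearly to the level q(p) = p/(1+p)), the set K₂ = {(x,p) : ∀n, g^n(x,p) ≠ s₂} has Hausdorff dimension 2. -/

import Mathlib

open Filter MeasureTheory
open scoped ENNReal NNReal

/-- The sieving map `g` on the unit square `Y = [0,1] × [0,1]`. -/
noncomputable def g : ℝ × ℝ → ℝ × ℝ := fun z =>
  let x := z.1
  let p := z.2
  if p = 1 then (1 / 2, 1)
  else if x < (1 - p) / 2 then (2 * x / (1 - p), p / (1 + p))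
  else if x ≤ (1 + p) / 2 then (1 / 2, 1)
  else (2 * (x - (1 + p) / 2) / (1 - p), p / (1 + p))


section aux
set_option linter.unusedSectionVars false
set_option linter.unusedVariables false

noncomputable def LL (k : ℕ) (p : ℝ) : ℝ := (1 - p) / (2 ^ k * (1 + ((k : ℝ) - 1) * p))
noncomputable def aa (k : ℕ) (p : ℝ) : ℝ := LL k p - LL (k + 1) p

noncomputable def bitZ (k : ℕ) (t : ℝ) : ℤ := ⌊2 ^ (k + 1) * t⌋ - 2 * ⌊2 ^ k * t⌋
noncomputable def bit (k : ℕ) (t : ℝ) : ℝ := (bitZ k t : ℝ)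
noncomputable def XX (t p : ℝ) : ℝ := ∑' k, bit k t * aa k p
noncomputable def TT (t : ℝ) : ℝ := Int.fract (2 * t)

lemma floor_two_pow_succ (k : ℕ) (t : ℝ) :
    ⌊(2:ℝ) ^ (k + 1) * t⌋ = 2 * ⌊(2:ℝ) ^ k * t⌋ + bitZ k t := by
  unfold bitZ; ring

lemma bitZ_cases (k : ℕ) (t : ℝ) : bitZ k t = 0 ∨ bitZ k t = 1 := by
  have h2 : (2:ℝ) ^ (k+1) * t = 2 * (2 ^ k * t) := by ring
  unfold bitZ
  rw [h2]
  set y : ℝ := 2 ^ k * t with hy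
  have h1 : (2 * ⌊y⌋ : ℤ) ≤ ⌊2 * y⌋ := by
    apply Int.le_floor.2
    push_cast
    nlinarith [Int.floor_le y]
  have h3 : ⌊2 * y⌋ < 2 * ⌊y⌋ + 2 := by
    apply Int.floor_lt.2
    push_cast
    nlinarith [Int.lt_floor_add_one y]
  omega

lemma bit_nonneg (k : ℕ) (t : ℝ) : 0 ≤ bit k t := by
  rcases bitZ_cases k t with h | h <;> simp [bit, h]

lemma bit_le_one (k : ℕ) (t : ℝ) : bit k t ≤ 1 := by
  rcases bitZ_cases k t with h | h <;> simp [bit, h]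

lemma bitZ_shift (k : ℕ) (t : ℝ) : bitZ k (TT t) = bitZ (k + 1) t := by
  have key : ∀ m : ℕ, (⌊(2:ℝ) ^ m * TT t⌋ : ℤ) = ⌊(2:ℝ) ^ (m+1) * t⌋ - 2 ^ m * ⌊2 * t⌋ := by
    intro m
    have h : (2:ℝ) ^ m * TT t = 2 ^ (m+1) * t - ((2 ^ m * ⌊2 * t⌋ : ℤ) : ℝ) := by
      rw [TT, ← Int.self_sub_floor]
      push_cast
      ring
    rw [h, Int.floor_sub_intCast]
  unfold bitZ
  rw [key, key]
  ring

section LLlem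
variable {p : ℝ} (hp0 : 0 < p) (hp1 : p < 1)

include hp0 hp1

lemma den_pos (k : ℕ) : 0 < 1 + ((k : ℝ) - 1) * p := by
  have h : (0:ℝ) ≤ (k:ℝ) * p := mul_nonneg (Nat.cast_nonneg k) hp0.le
  nlinarith

lemma den_pos' (k : ℕ) : 0 < 1 + (k : ℝ) * p := by
  have h : (0:ℝ) ≤ (k:ℝ) * p := mul_nonneg (Nat.cast_nonneg k) hp0.le
  nlinarith

lemma LL_pos (k : ℕ) : 0 < LL k p := by
  unfold LL
  have h := den_pos hp0 hp1 k
  exact div_pos (by linarith) (by positivity)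

lemma LL_zero : LL 0 p = 1 := by
  unfold LL
  push_cast
  rw [show (1:ℝ) + ((0:ℝ) - 1) * p = 1 - p by ring]
  have : (1:ℝ) - p ≠ 0 := by linarith
  field_simp

lemma LL_le (k : ℕ) : LL k p ≤ (1/2) ^ k := by
  unfold LL
  have h := den_pos hp0 hp1 k
  have hkp : (0:ℝ) ≤ (k:ℝ) * p := mul_nonneg (Nat.cast_nonneg k) hp0.le
  rw [div_le_iff₀ (by positivity)]
  have h3 : ((1:ℝ)/2) ^ k * 2 ^ k = 1 := by
    rw [← mul_pow]; norm_num
  rw [← mul_assoc, h3, one_mul]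
  nlinarith

lemma LL_tendsto : Tendsto (fun n => LL n p) atTop (nhds 0) := by
  refine squeeze_zero (fun n => (LL_pos hp0 hp1 n).le) (fun n => LL_le hp0 hp1 n) ?_
  exact tendsto_pow_atTop_nhds_zero_of_lt_one (by norm_num) (by norm_num)

lemma aa_eq (k : ℕ) :
    aa k p = (1 - p) * (1 + ((k:ℝ) + 1) * p) /
      (2 ^ (k+1) * (1 + ((k:ℝ) - 1) * p) * (1 + (k:ℝ) * p)) := by
  unfold aa LL
  have h1 := (den_pos hp0 hp1 k).ne'
  have h2 := (den_pos' hp0 hp1 k).ne'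
  have h4 : ((2:ℝ)) ^ k ≠ 0 := by positivity
  push_cast
  rw [show (1:ℝ) + ((k:ℝ) + 1 - 1) * p = 1 + (k:ℝ) * p by ring]
  rw [div_sub_div _ _ (mul_ne_zero h4 h1) (mul_ne_zero (pow_ne_zero _ two_ne_zero) h2),
    div_eq_div_iff (mul_ne_zero (mul_ne_zero h4 h1) (mul_ne_zero (pow_ne_zero _ two_ne_zero) h2))
      (mul_ne_zero (mul_ne_zero (pow_ne_zero _ two_ne_zero) h1) h2)]
  ring

lemma aa_pos (k : ℕ) : 0 < aa k p := by
  rw [aa_eq hp0 hp1]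
  have h1 := den_pos hp0 hp1 k
  have h2 := den_pos' hp0 hp1 k
  have h3 : 0 < 1 + ((k:ℝ) + 1) * p := by
    have : (0:ℝ) ≤ (k:ℝ) * p := mul_nonneg (Nat.cast_nonneg k) hp0.le
    nlinarith
  exact div_pos (mul_pos (by linarith) h3) (by positivity)

lemma gap_eq (k : ℕ) :
    LL k p - 2 * LL (k+1) p =
      (1 - p) * p / (2 ^ k * (1 + ((k:ℝ) - 1) * p) * (1 + (k:ℝ) * p)) := by
  unfold LL
  have h1 := (den_pos hp0 hp1 k).ne'
  have h2 := (den_pos' hp0 hp1 k).ne'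
  have h4 : ((2:ℝ)) ^ k ≠ 0 := by positivity
  push_cast
  rw [show (1:ℝ) + ((k:ℝ) + 1 - 1) * p = 1 + (k:ℝ) * p by ring]
  rw [mul_div_assoc', div_sub_div _ _ (mul_ne_zero h4 h1) (mul_ne_zero (pow_ne_zero _ two_ne_zero) h2),
    div_eq_div_iff (mul_ne_zero (mul_ne_zero h4 h1) (mul_ne_zero (pow_ne_zero _ two_ne_zero) h2))
      (mul_ne_zero (mul_ne_zero h4 h1) h2)]
  ring

lemma sum_range_aa (n : ℕ) : ∑ k ∈ Finset.range n, aa k p = 1 - LL n p := by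
  have := Finset.sum_range_sub' (fun k => LL k p) n
  unfold aa
  rw [this, LL_zero hp0 hp1]

lemma summable_aa : Summable (fun k => aa k p) := by
  refine summable_of_sum_range_le (fun n => (aa_pos hp0 hp1 n).le) (fun n => ?_) (c := 1)
  rw [sum_range_aa hp0 hp1]
  have := LL_pos hp0 hp1 n
  linarith

lemma tsum_aa : ∑' k, aa k p = 1 := by
  refine ((summable_aa hp0 hp1).hasSum_iff_tendsto_nat.2 ?_).tsum_eq
  simp only [sum_range_aa hp0 hp1]
  have := (LL_tendsto hp0 hp1).const_sub 1
  simpa using this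

lemma tsum_aa_tail (m : ℕ) : ∑' k, aa (k + m) p = LL m p := by
  have hs : Summable (fun k => aa (k + m) p) :=
    (summable_nat_add_iff (f := fun k => aa k p) m).2 (summable_aa hp0 hp1)
  refine (hs.hasSum_iff_tendsto_nat.2 ?_).tsum_eq
  have heq : ∀ n, ∑ i ∈ Finset.range n, aa (i + m) p = LL m p - LL (n + m) p := by
    intro n
    induction n with
    | zero => simp
    | succ n ih =>
      rw [Finset.sum_range_succ, ih]
      have h1 : n + 1 + m = n + m + 1 := by omega
      rw [h1]
      unfold aa
      linarith
  simp only [heq]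
  have h2 : Tendsto (fun n : ℕ => LL (n + m) p) atTop (nhds 0) :=
    (tendsto_add_atTop_iff_nat m).2 (LL_tendsto hp0 hp1)
  have := h2.const_sub (LL m p)
  simpa using this

lemma LL_rec (k : ℕ) : LL (k+1) p = (1 - p)/2 * LL k (p/(1+p)) := by
  unfold LL
  have h1 : (0:ℝ) < 1 + p := by linarith
  have h2 := (den_pos' hp0 hp1 k).ne'
  have h3 : 1 + ((k:ℝ) - 1) * (p/(1+p)) = (1 + (k:ℝ)*p) / (1+p) := by
    field_simp; ring
  rw [h3]
  push_cast
  rw [show (1:ℝ) + ((k:ℝ) + 1 - 1) * p = 1 + (k:ℝ) * p by ring]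
  have h4 : ((2:ℝ)) ^ k ≠ 0 := by positivity
  field_simp
  ring

lemma aa_rec (k : ℕ) : aa (k+1) p = (1 - p)/2 * aa k (p/(1+p)) := by
  unfold aa
  rw [LL_rec hp0 hp1, LL_rec hp0 hp1]
  ring

lemma aa_zero : aa 0 p = (1+p)/2 := by
  have h1 : LL 1 p = (1-p)/2 := by
    unfold LL; norm_num
  unfold aa
  rw [LL_zero hp0 hp1, show (0:ℕ)+1 = 1 from rfl, h1]
  ring

end LLlem
section XXlem
variable {t p : ℝ} (hp0 : 0 < p) (hp1 : p < 1)

include hp0 hp1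

lemma summable_bitaa (t : ℝ) : Summable (fun k => bit k t * aa k p) := by
  refine Summable.of_nonneg_of_le
    (fun k => mul_nonneg (bit_nonneg k t) (aa_pos hp0 hp1 k).le)
    (fun k => ?_) (summable_aa hp0 hp1)
  exact mul_le_of_le_one_left (aa_pos hp0 hp1 k).le (bit_le_one k t)

lemma q_mem : 0 < p/(1+p) ∧ p/(1+p) < 1 := by
  constructor
  · apply div_pos hp0; linarith
  · rw [div_lt_one (by linarith)]; linarith

lemma XX_rec (t : ℝ) :
    XX t p = bit 0 t * ((1+p)/2) + (1-p)/2 * XX (TT t) (p/(1+p)) := by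
  obtain ⟨hq0, hq1⟩ := q_mem hp0 hp1
  have h1 : XX t p = bit 0 t * aa 0 p + ∑' k, bit (k+1) t * aa (k+1) p :=
    Summable.tsum_eq_zero_add (summable_bitaa hp0 hp1 t)
  have h2 : ∀ k : ℕ, bit (k+1) t * aa (k+1) p
      = (1-p)/2 * (bit k (TT t) * aa k (p/(1+p))) := by
    intro k
    rw [show bit (k+1) t = bit k (TT t) by rw [bit, bit, bitZ_shift],
      aa_rec hp0 hp1 k]
    ring
  rw [h1, aa_zero hp0 hp1]
  simp only [h2]
  rw [tsum_mul_left]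
  rfl

lemma XX_nonneg (t : ℝ) : 0 ≤ XX t p :=
  tsum_nonneg fun k => mul_nonneg (bit_nonneg k t) (aa_pos hp0 hp1 k).le

lemma XX_le_one (t : ℝ) : XX t p ≤ 1 := by
  rw [show (1:ℝ) = ∑' k, aa k p from (tsum_aa hp0 hp1).symm]
  exact Summable.tsum_le_tsum
    (fun k => mul_le_of_le_one_left (aa_pos hp0 hp1 k).le (bit_le_one k t))
    (summable_bitaa hp0 hp1 t) (summable_aa hp0 hp1)

omit hp0 hp1 in
lemma ex_bit_one (ht : t ∈ Set.Ico (0:ℝ) 1) (hirr : Irrational t) :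
    ∃ k, bitZ k t = 1 := by
  by_contra h
  push_neg at h
  have hz : ∀ k, bitZ k t = 0 := fun k => (bitZ_cases k t).resolve_right (h k)
  have hfl : ∀ k : ℕ, ⌊(2:ℝ) ^ k * t⌋ = 0 := by
    intro k
    induction k with
    | zero => simpa using Int.floor_eq_zero_iff.2 (by simpa using ht)
    | succ k ih => rw [floor_two_pow_succ, ih, hz]; ring
  have ht0 : 0 < t := by
    rcases ht.1.lt_or_eq with h' | h'
    · exact h'
    · exact absurd (by simpa using h'.symm : t = ((0:ℤ):ℝ)) (by simpa using hirr.ne_int 0)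
  obtain ⟨k, hk⟩ := pow_unbounded_of_one_lt (1/t) (show (1:ℝ) < 2 by norm_num)
  have h2 : (2:ℝ) ^ k * t < 1 := by
    have := (Int.floor_eq_zero_iff.1 (hfl k)).2
    simpa using this
  rw [div_lt_iff₀ ht0] at hk
  nlinarith [pow_pos (show (0:ℝ) < 2 by norm_num) k]

omit hp0 hp1 in
lemma ex_bit_zero (ht : t ∈ Set.Ico (0:ℝ) 1) (hirr : Irrational t) :
    ∃ k, bitZ k t = 0 := by
  by_contra h
  push_neg at h
  have hz : ∀ k, bitZ k t = 1 := fun k => (bitZ_cases k t).resolve_left (h k)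
  have hfl : ∀ k : ℕ, ⌊(2:ℝ) ^ k * t⌋ = 2 ^ k - 1 := by
    intro k
    induction k with
    | zero => simpa using Int.floor_eq_zero_iff.2 (by simpa using ht)
    | succ k ih => rw [floor_two_pow_succ, ih, hz]; ring
  obtain ⟨k, hk⟩ := exists_pow_lt_of_lt_one (show (0:ℝ) < 1 - t by linarith [ht.2])
    (show (1:ℝ)/2 < 1 by norm_num)
  have h2 : ((2:ℝ) ^ k - 1 : ℝ) ≤ 2 ^ k * t := by
    have := Int.floor_le ((2:ℝ) ^ k * t)
    rw [hfl k] at this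
    push_cast at this
    linarith
  have h3 : ((1:ℝ)/2) ^ k * 2 ^ k = 1 := by rw [← mul_pow]; norm_num
  nlinarith [pow_pos (show (0:ℝ) < 2 by norm_num) k,
    pow_pos (show (0:ℝ) < 1/2 by norm_num) k]

lemma XX_pos (ht : t ∈ Set.Ico (0:ℝ) 1) (hirr : Irrational t) : 0 < XX t p := by
  obtain ⟨k₀, hk₀⟩ := ex_bit_one ht hirr
  have hterm : bit k₀ t * aa k₀ p = aa k₀ p := by rw [bit, hk₀]; simp
  calc 0 < aa k₀ p := aa_pos hp0 hp1 k₀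
    _ = bit k₀ t * aa k₀ p := hterm.symm
    _ ≤ XX t p := Summable.le_tsum (summable_bitaa hp0 hp1 t) k₀
        (fun j _ => mul_nonneg (bit_nonneg j t) (aa_pos hp0 hp1 j).le)

lemma XX_lt_one (ht : t ∈ Set.Ico (0:ℝ) 1) (hirr : Irrational t) : XX t p < 1 := by
  obtain ⟨k₁, hk₁⟩ := ex_bit_zero ht hirr
  have hsum_ite : Summable (fun n => if n = k₁ then 0 else aa n p) := by
    refine Summable.of_nonneg_of_le (fun n => ?_) (fun n => ?_) (summable_aa hp0 hp1)
    · split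
      · exact le_refl 0
      · exact (aa_pos hp0 hp1 n).le
    · split
      · exact (aa_pos hp0 hp1 n).le
      · exact le_refl _
  have h1 : XX t p ≤ ∑' n, if n = k₁ then 0 else aa n p := by
    refine Summable.tsum_le_tsum (fun n => ?_) (summable_bitaa hp0 hp1 t) hsum_ite
    by_cases hn : n = k₁
    · subst hn
      rw [bit, hk₁]
      simp
    · rw [if_neg hn]
      exact mul_le_of_le_one_left (aa_pos hp0 hp1 n).le (bit_le_one n t)
  have h2 : ∑' n, aa n p = aa k₁ p + ∑' n, if n = k₁ then 0 else aa n p :=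
    Summable.tsum_eq_add_tsum_ite (summable_aa hp0 hp1) k₁
  have h3 := tsum_aa hp0 hp1
  have h4 := aa_pos hp0 hp1 k₁
  linarith

end XXlem


lemma TT_mem (t : ℝ) : TT t ∈ Set.Ico (0:ℝ) 1 :=
  ⟨Int.fract_nonneg _, Int.fract_lt_one _⟩

lemma TT_irrational {t : ℝ} (hirr : Irrational t) : Irrational (TT t) := by
  have h2t : Irrational (2 * t) := by
    have := hirr.ratCast_mul (q := 2) (by norm_num)
    simpa using this
  rw [TT, ← Int.self_sub_floor]
  exact h2t.sub_intCast _

lemma g_step {t p : ℝ} (ht : t ∈ Set.Ico (0:ℝ) 1) (hirr : Irrational t)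
    (hp0 : 0 < p) (hp1 : p < 1) :
    g (XX t p, p) = (XX (TT t) (p/(1+p)), p/(1+p)) := by
  obtain ⟨hq0, hq1⟩ := q_mem hp0 hp1
  have hX0 : 0 < XX (TT t) (p/(1+p)) := XX_pos hq0 hq1 (TT_mem t) (TT_irrational hirr)
  have hX1 : XX (TT t) (p/(1+p)) < 1 := XX_lt_one hq0 hq1 (TT_mem t) (TT_irrational hirr)
  have hrec := XX_rec hp0 hp1 t
  have h1p : (1:ℝ) - p ≠ 0 := by linarith
  rcases bitZ_cases 0 t with hb | hb
  · have hb' : bit 0 t = 0 := by rw [bit, hb]; simp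
    rw [hb'] at hrec
    have hXlt : XX t p < (1 - p) / 2 := by
      rw [hrec]
      nlinarith
    show g (XX t p, p) = _
    rw [g]
    simp only [if_neg hp1.ne, if_pos hXlt]
    refine Prod.ext ?_ rfl
    show 2 * XX t p / (1 - p) = XX (TT t) (p/(1+p))
    rw [hrec]
    field_simp
    ring
  · have hb' : bit 0 t = 1 := by rw [bit, hb]; simp
    rw [hb'] at hrec
    have hXgt : (1 + p) / 2 < XX t p := by
      rw [hrec]
      nlinarith
    have hnlt : ¬ (XX t p < (1 - p) / 2) := by push_neg; nlinarith
    have hnle : ¬ (XX t p ≤ (1 + p) / 2) := by push_neg; exact hXgt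
    show g (XX t p, p) = _
    rw [g]
    simp only [if_neg hp1.ne, if_neg hnlt, if_neg hnle]
    refine Prod.ext ?_ rfl
    show 2 * (XX t p - (1 + p)/2) / (1 - p) = XX (TT t) (p/(1+p))
    rw [hrec]
    field_simp
    ring

lemma g_orbit (n : ℕ) : ∀ t p : ℝ, t ∈ Set.Ico (0:ℝ) 1 → Irrational t →
    0 < p → p < 1 →
    g^[n] (XX t p, p) = (XX (TT^[n] t) (p/(1+n*p)), p/(1+n*p)) := by
  induction n with
  | zero => intro t p ht hirr hp0 hp1; simp
  | succ n ih =>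
    intro t p ht hirr hp0 hp1
    obtain ⟨hq0, hq1⟩ := q_mem hp0 hp1
    rw [Function.iterate_succ_apply, g_step ht hirr hp0 hp1,
      ih (TT t) _ (TT_mem t) (TT_irrational hirr) hq0 hq1]
    have h1 : p/(1+p)/(1 + n * (p/(1+p))) = p/(1+(n+1)*p) := by
      have e1 : (0:ℝ) < 1 + p := by linarith
      have e2 : (0:ℝ) < 1 + (n+1)*p := by positivity
      have e3 : 1 + (n:ℝ) * (p/(1+p)) = (1 + (n+1)*p)/(1+p) := by
        field_simp; ring
      rw [e3]
      field_simp
    rw [← Function.iterate_succ_apply TT, h1]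
    push_cast
    rfl

end aux


lemma LL_def (k : ℕ) (p : ℝ) : LL k p = (1 - p) / (2 ^ k * (1 + ((k : ℝ) - 1) * p)) := rfl
lemma aa_def (k : ℕ) (p : ℝ) : aa k p = LL k p - LL (k + 1) p := rfl

section Lip
variable {p p' : ℝ} (hp : p ∈ Set.Icc (1/2:ℝ) (3/4)) (hp' : p' ∈ Set.Icc (1/2:ℝ) (3/4))

lemma half_mem_bounds (hp : p ∈ Set.Icc (1/2:ℝ) (3/4)) : 0 < p ∧ p < 1 :=
  ⟨lt_of_lt_of_le (by norm_num) hp.1, lt_of_le_of_lt hp.2 (by norm_num)⟩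

include hp hp'

lemma LL_lip (k : ℕ) : |LL (k+1) p - LL (k+1) p'| ≤ (1/2) ^ (k+1) * |p - p'| := by
  obtain ⟨hp0, hp1⟩ := half_mem_bounds hp
  obtain ⟨hp0', hp1'⟩ := half_mem_bounds hp'
  have hd := den_pos hp0 hp1 (k+1)
  have hd' := den_pos hp0' hp1' (k+1)
  have hId : LL (k+1) p - LL (k+1) p' =
      (((k:ℝ)+1) * (p' - p)) / (2 ^ (k+1) * (1 + (k:ℝ) * p) * (1 + (k:ℝ) * p')) := by
    rw [LL_def, LL_def]
    push_cast at hd hd' ⊢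
    rw [show ((k:ℝ) + 1 - 1) = (k:ℝ) by ring] at *
    have e1 : (1:ℝ) + (k:ℝ) * p ≠ 0 := by positivity
    have e2 : (1:ℝ) + (k:ℝ) * p' ≠ 0 := by positivity
    have e3 : ((2:ℝ)) ^ (k+1) ≠ 0 := by positivity
    field_simp
    ring
  rw [hId]
  have hk2 : (0:ℝ) < 1 + (k:ℝ)*p := by positivity
  have hk2' : (0:ℝ) < 1 + (k:ℝ)*p' := by positivity
  rw [abs_div, abs_mul]
  rw [abs_of_pos (show (0:ℝ) < 2^(k+1) * ((1 + (k:ℝ)*p)) * ((1 + (k:ℝ)*p')) by positivity)]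
  rw [abs_of_pos (show (0:ℝ) < (k:ℝ)+1 by positivity), abs_sub_comm p' p]
  rw [div_le_iff₀ (by positivity)]
  have hDk : ((k:ℝ)+1) ≤ (1 + (k:ℝ)*p) * (1 + (k:ℝ)*p') := by
    have h1 : 1 + (k:ℝ)/2 ≤ 1 + (k:ℝ)*p := by nlinarith [Nat.cast_nonneg (α := ℝ) k, hp.1]
    have h1' : 1 + (k:ℝ)/2 ≤ 1 + (k:ℝ)*p' := by nlinarith [Nat.cast_nonneg (α := ℝ) k, hp'.1]
    nlinarith [Nat.cast_nonneg (α := ℝ) k]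
  have h12 : ((1:ℝ)/2) ^ (k+1) * 2 ^ (k+1) = 1 := by rw [← mul_pow]; norm_num
  have key : (1/2:ℝ)^(k+1) * |p - p'| * (2^(k+1) * (1 + (k:ℝ)*p) * (1 + (k:ℝ)*p'))
      = |p - p'| * ((1 + (k:ℝ)*p) * (1 + (k:ℝ)*p')) := by
    linear_combination (|p - p'| * ((1 + (k:ℝ)*p) * (1 + (k:ℝ)*p'))) * h12
  rw [key]
  exact mul_le_mul_of_nonneg_right hDk (abs_nonneg _) |>.trans_eq (mul_comm _ _)

lemma aa_lip (k : ℕ) : |aa k p - aa k p'| ≤ 3/2 * (1/2) ^ k * |p - p'| := by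
  match k with
  | 0 =>
    obtain ⟨hp0, hp1⟩ := half_mem_bounds hp
    obtain ⟨hp0', hp1'⟩ := half_mem_bounds hp'
    rw [aa_zero hp0 hp1, aa_zero hp0' hp1']
    rw [show (1+p)/2 - (1+p')/2 = (p - p')/2 by ring, abs_div]
    rw [abs_of_pos (by norm_num : (0:ℝ) < 2)]
    rw [pow_zero]
    linarith [abs_nonneg (p - p')]
  | (k+1) =>
    rw [aa_def, aa_def]
    have h1 := LL_lip hp hp' k
    have h2 := LL_lip hp hp' (k+1)
    calc |LL (k+1) p - LL (k+1+1) p - (LL (k+1) p' - LL (k+1+1) p')|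
        ≤ |LL (k+1) p - LL (k+1) p'| + |LL (k+1+1) p - LL (k+1+1) p'| := by
          rw [show LL (k+1) p - LL (k+1+1) p - (LL (k+1) p' - LL (k+1+1) p')
            = (LL (k+1) p - LL (k+1) p') - (LL (k+1+1) p - LL (k+1+1) p') by ring]
          exact abs_sub _ _
      _ ≤ (1/2)^(k+1) * |p-p'| + (1/2)^(k+1+1) * |p-p'| := add_le_add h1 h2
      _ = 3/2 * (1/2)^(k+1) * |p-p'| := by ring

set_option maxHeartbeats 1000000 in
lemma XX_lip (t : ℝ) : |XX t p - XX t p'| ≤ 3 * |p - p'| := by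
  obtain ⟨hp0, hp1⟩ := half_mem_bounds hp
  obtain ⟨hp0', hp1'⟩ := half_mem_bounds hp'
  have hs : Summable (fun k => bit k t * aa k p) := summable_bitaa hp0 hp1 t
  have hs' : Summable (fun k => bit k t * aa k p') := summable_bitaa hp0' hp1' t
  have hdiff : XX t p - XX t p' = ∑' k, (bit k t * aa k p - bit k t * aa k p') :=
    (Summable.tsum_sub hs hs').symm
  have hb : ∀ k : ℕ, |bit k t * aa k p - bit k t * aa k p'| ≤ 3/2 * (1/2)^k * |p - p'| := by
    intro k
    rw [show bit k t * aa k p - bit k t * aa k p' = bit k t * (aa k p - aa k p') by ring,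
      abs_mul, abs_of_nonneg (bit_nonneg k t)]
    calc bit k t * |aa k p - aa k p'| ≤ 1 * |aa k p - aa k p'| :=
          mul_le_mul_of_nonneg_right (bit_le_one k t) (abs_nonneg _)
      _ = |aa k p - aa k p'| := one_mul _
      _ ≤ 3/2 * (1/2)^k * |p - p'| := aa_lip hp hp' k
  have hsb : Summable (fun k : ℕ => 3/2 * (1/2:ℝ)^k * |p - p'|) := by
    apply Summable.mul_right
    exact (summable_geometric_of_lt_one (by norm_num) (by norm_num)).mul_left _
  rw [hdiff]
  have hnorm : Summable fun k => ‖bit k t * aa k p - bit k t * aa k p'‖ := by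
    simpa [Real.norm_eq_abs] using (hs.sub hs').abs
  calc |∑' k, (bit k t * aa k p - bit k t * aa k p')|
      ≤ ∑' k, |bit k t * aa k p - bit k t * aa k p'| := by
        simpa [Real.norm_eq_abs] using
          norm_tsum_le_tsum_norm (f := fun k => bit k t * aa k p - bit k t * aa k p') hnorm
    _ ≤ ∑' k : ℕ, 3/2 * (1/2:ℝ)^k * |p - p'| := Summable.tsum_le_tsum hb (hs.sub hs').abs hsb
    _ = ∑' k : ℕ, (3/2 * |p - p'|) * (1/2:ℝ)^k := by congr 1; ext k; ring
    _ = (3/2 * |p - p'|) * ∑' k : ℕ, (1/2:ℝ)^k := tsum_mul_left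
    _ = 3 * |p - p'| := by
        rw [tsum_geometric_of_lt_one (by norm_num) (by norm_num)]
        norm_num
        ring
end Lip

lemma floor_eq_of_bits {t t' : ℝ} (ht : t ∈ Set.Ico (0:ℝ) 1) (ht' : t' ∈ Set.Ico (0:ℝ) 1)
    (n : ℕ) (hbits : ∀ k < n, bitZ k t = bitZ k t') :
    ⌊(2:ℝ)^n * t⌋ = ⌊(2:ℝ)^n * t'⌋ := by
  induction n with
  | zero =>
    simp only [pow_zero, one_mul]
    rw [Int.floor_eq_zero_iff.2 (by simpa using ht), Int.floor_eq_zero_iff.2 (by simpa using ht')]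
  | succ n ih =>
    rw [floor_two_pow_succ, floor_two_pow_succ,
      ih (fun k hk => hbits k (hk.trans (Nat.lt_succ_self n))), hbits n (Nat.lt_succ_self n)]

lemma abs_t_le {t t' : ℝ} (ht : t ∈ Set.Ico (0:ℝ) 1) (ht' : t' ∈ Set.Ico (0:ℝ) 1)
    (n : ℕ) (hbits : ∀ k < n, bitZ k t = bitZ k t') :
    |t - t'| ≤ (1/2)^n := by
  have hfl := floor_eq_of_bits ht ht' n hbits
  have h2n : (0:ℝ) < 2^n := by positivity
  have h1 := Int.floor_le ((2:ℝ)^n * t)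
  have h2 := Int.lt_floor_add_one ((2:ℝ)^n * t)
  have h3 := Int.floor_le ((2:ℝ)^n * t')
  have h4 := Int.lt_floor_add_one ((2:ℝ)^n * t')
  rw [hfl] at h1 h2
  have habs : |(2:ℝ)^n * t - 2^n * t'| ≤ 1 := by
    rw [abs_le]; constructor <;> linarith
  have heq : |t - t'| = |(2:ℝ)^n * t - 2^n * t'| / 2^n := by
    rw [show (2:ℝ)^n * t - 2^n * t' = 2^n * (t - t') by ring, abs_mul,
      abs_of_pos h2n]
    field_simp
  rw [heq, div_le_iff₀ h2n]
  calc |(2:ℝ)^n * t - 2^n * t'| ≤ 1 := habs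
    _ = (1/2:ℝ)^n * 2^n := by rw [← mul_pow]; norm_num
    _ ≤ _ := le_refl _

lemma eq_of_all_bits {t t' : ℝ} (ht : t ∈ Set.Ico (0:ℝ) 1) (ht' : t' ∈ Set.Ico (0:ℝ) 1)
    (hbits : ∀ k, bitZ k t = bitZ k t') : t = t' := by
  by_contra hne
  have hpos : 0 < |t - t'| := abs_pos.2 (sub_ne_zero.2 hne)
  obtain ⟨n, hn⟩ := exists_pow_lt_of_lt_one hpos (show (1:ℝ)/2 < 1 by norm_num)
  exact absurd (abs_t_le ht ht' n (fun k _ => hbits k)) (not_le.2 hn)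

lemma XX_sep {t t' p : ℝ} (n : ℕ)
    (hbits : ∀ k < n, bitZ k t = bitZ k t') (h0 : bitZ n t = 0) (h1 : bitZ n t' = 1)
    (hp : p ∈ Set.Icc (1/2:ℝ) (3/4)) :
    (1/2)^n / (8*((n:ℝ)+1)^2) ≤ XX t' p - XX t p := by
  obtain ⟨hp0, hp1⟩ := half_mem_bounds hp
  have hs := summable_bitaa hp0 hp1 t
  have hs' := summable_bitaa hp0 hp1 t'
  have hf := hs'.sub hs
  set f : ℕ → ℝ := fun k => bit k t' * aa k p - bit k t * aa k p with hfdef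
  have hdiff : XX t' p - XX t p = ∑' k, f k := (Summable.tsum_sub hs' hs).symm
  have hsplit : ∑' k, f k = ∑ k ∈ Finset.range (n+1), f k + ∑' k, f (k + (n+1)) :=
    (Summable.sum_add_tsum_nat_add (n+1) hf).symm
  have hhead : ∑ k ∈ Finset.range (n+1), f k = aa n p := by
    rw [Finset.sum_range_succ]
    have hzero : ∑ k ∈ Finset.range n, f k = 0 := by
      apply Finset.sum_eq_zero
      intro k hk
      have := hbits k (Finset.mem_range.1 hk)
      simp only [hfdef, bit, this]
      ring
    rw [hzero, zero_add]
    simp only [hfdef, bit, h0, h1]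
    push_cast
    ring
  have htail : -LL (n+1) p ≤ ∑' k, f (k + (n+1)) := by
    have hsf : Summable (fun k => f (k + (n+1))) := (summable_nat_add_iff (n+1)).2 hf
    have hsa : Summable (fun k => aa (k + (n+1)) p) :=
      (summable_nat_add_iff (f := fun k => aa k p) (n+1)).2 (summable_aa hp0 hp1)
    have hterm : ∀ k : ℕ, -aa (k + (n+1)) p ≤ f (k + (n+1)) := by
      intro k
      have ha := (aa_pos hp0 hp1 (k + (n+1))).le
      have b1 := bit_nonneg (k + (n+1)) t
      have b2 := bit_le_one (k + (n+1)) t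
      have b3 := bit_nonneg (k + (n+1)) t'
      simp only [hfdef]
      nlinarith
    calc -LL (n+1) p = ∑' k, -(aa (k + (n+1)) p) := by
          rw [tsum_neg, tsum_aa_tail hp0 hp1 (n+1)]
      _ ≤ ∑' k, f (k + (n+1)) := Summable.tsum_le_tsum hterm hsa.neg hsf
  have hgap : aa n p - LL (n+1) p = LL n p - 2 * LL (n+1) p := by
    rw [aa_def]; ring
  have hgap2 := gap_eq hp0 hp1 n
  have hlow : (1/2)^n / (8*((n:ℝ)+1)^2) ≤ LL n p - 2 * LL (n+1) p := by
    rw [hgap2]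
    have hA := den_pos hp0 hp1 n
    have hB := den_pos' hp0 hp1 n
    have hA2 : 1 + ((n:ℝ) - 1) * p ≤ (n:ℝ) + 1 := by nlinarith [Nat.cast_nonneg (α := ℝ) n, hp.2]
    have hB2 : 1 + (n:ℝ) * p ≤ (n:ℝ) + 1 := by nlinarith [Nat.cast_nonneg (α := ℝ) n, hp.2]
    have hnum : (1:ℝ)/8 ≤ (1 - p) * p := by nlinarith [hp.1, hp.2]
    have h2n : (0:ℝ) < 2^n := by positivity
    have hLHS : ((1:ℝ)/2)^n / (8*((n:ℝ)+1)^2) = (1/8) / (2^n * ((n:ℝ)+1)^2) := by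
      rw [div_eq_div_iff (by positivity) (by positivity)]
      have : ((1:ℝ)/2)^n * 2^n = 1 := by rw [← mul_pow]; norm_num
      nlinarith [this]
    rw [hLHS]
    apply div_le_div₀ (by nlinarith [hp.1, hp.2]) hnum (by positivity)
    calc (2:ℝ)^n * (1 + ((n:ℝ) - 1) * p) * (1 + (n:ℝ) * p)
        ≤ 2^n * ((n:ℝ)+1) * ((n:ℝ)+1) := by
          apply mul_le_mul (mul_le_mul (le_refl _) hA2 hA.le (by positivity)) hB2 hB.le
            (by positivity)
      _ = 2^n * ((n:ℝ)+1)^2 := by ring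
  rw [hdiff, hsplit, hhead]
  have := LL_pos hp0 hp1 (n+1)
  linarith

def Dset : Set (ℝ × ℝ) :=
  {z | (z.1 ∈ Set.Ico (0:ℝ) 1 ∧ Irrational z.1) ∧ z.2 ∈ Set.Icc (1/2:ℝ) (3/4)}

noncomputable def Phi : ℝ × ℝ → ℝ × ℝ := fun z => (XX z.1 z.2, z.2)

lemma half_bounds {p : ℝ} (hp : p ∈ Set.Icc (1/2:ℝ) (3/4)) : 0 < p ∧ p < 1 :=
  ⟨lt_of_lt_of_le (by norm_num) hp.1, lt_of_le_of_lt hp.2 (by norm_num)⟩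

lemma M_exists {θ : ℝ} (hθ0 : 0 < θ) (hθ1 : θ < 1) :
    ∃ M : ℝ, 1 ≤ M ∧ ∀ n : ℕ, ((n:ℝ)+1)^2 * θ^n ≤ M := by
  have hn : ‖θ‖ < 1 := by rwa [Real.norm_eq_abs, abs_of_pos hθ0]
  have h2 := summable_pow_mul_geometric_of_norm_lt_one (R := ℝ) 2 hn
  have h1 := summable_pow_mul_geometric_of_norm_lt_one (R := ℝ) 1 hn
  have h0 : Summable (fun n : ℕ => θ^n) := summable_geometric_of_lt_one hθ0.le hθ1
  have hsum : Summable (fun n : ℕ => ((n:ℝ)+1)^2 * θ^n) := by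
    have := (h2.add (h1.mul_left 2)).add h0
    refine this.congr (fun n => ?_)
    push_cast
    ring
  have htend := hsum.tendsto_atTop_zero
  have hbdd := htend.bddAbove_range
  obtain ⟨M', hM'⟩ := hbdd
  refine ⟨max M' 1, le_max_right _ _, fun n => ?_⟩
  exact le_trans (hM' (Set.mem_range_self n)) (le_max_left _ _)

set_option maxHeartbeats 2000000 in
lemma key_est {r : ℝ} (hr0 : 0 < r) (hr1 : r < 1) :
    ∃ C : ℝ, 1 ≤ C ∧ ∀ z z' : ℝ × ℝ, z ∈ Dset → z' ∈ Dset →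
      dist z z' ≤ C * (dist (Phi z) (Phi z')) ^ r := by
  set θ : ℝ := (1/2:ℝ) ^ (1-r) with hθdef
  have hθ0 : 0 < θ := Real.rpow_pos_of_pos (by norm_num) _
  have hθ1 : θ < 1 := Real.rpow_lt_one (by norm_num) (by norm_num) (by linarith)
  obtain ⟨M, hM1, hM⟩ := M_exists hθ0 hθ1
  refine ⟨32 * M, by linarith, ?_⟩
  rintro ⟨t, p⟩ ⟨t', p'⟩ ⟨⟨ht, hirr⟩, hp⟩ ⟨⟨ht', hirr'⟩, hp'⟩
  obtain ⟨hp0, hp1⟩ := half_bounds hp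
  obtain ⟨hp0', hp1'⟩ := half_bounds hp'
  set d : ℝ := dist (Phi (t, p)) (Phi (t', p')) with hddef
  have hd0 : 0 ≤ d := dist_nonneg
  have hdPhi : d = max |XX t p - XX t' p'| |p - p'| := by
    rw [hddef, Prod.dist_eq]
    simp [Phi, Real.dist_eq]
  have hple : |p - p'| ≤ d := hdPhi ▸ le_max_right _ _
  have hXle : |XX t p - XX t' p'| ≤ d := hdPhi ▸ le_max_left _ _
  have hd1 : d ≤ 1 := by
    rw [hdPhi]
    apply max_le
    · have b1 := XX_pos hp0 hp1 ht hirr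
      have b2 := XX_lt_one hp0 hp1 ht hirr
      have b3 := XX_pos hp0' hp1' ht' hirr'
      have b4 := XX_lt_one hp0' hp1' ht' hirr'
      simp only [] at b1 b2 b3 b4
      rw [abs_le]; constructor <;> linarith
    · have e1 := hp.1
      have e2 := hp.2
      have e3 := hp'.1
      have e4 := hp'.2
      simp only [] at e1 e2 e3 e4
      rw [abs_le]; constructor <;> linarith
  have hdCd : d ≤ 32 * M * d ^ r := by
    rcases eq_or_lt_of_le hd0 with h | h
    · rw [← h, Real.zero_rpow hr0.ne']
      simp
    · have h3 : 0 ≤ d ^ r := Real.rpow_nonneg hd0 r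
      calc d = d ^ (1:ℝ) := (Real.rpow_one d).symm
        _ ≤ d ^ r := Real.rpow_le_rpow_of_exponent_ge h hd1 hr1.le
        _ = 1 * d ^ r := (one_mul _).symm
        _ ≤ (32*M) * d ^ r := mul_le_mul_of_nonneg_right (by linarith) h3
  have hdist : dist ((t,p) : ℝ × ℝ) (t', p') = max |t - t'| |p - p'| := by
    rw [Prod.dist_eq, Real.dist_eq, Real.dist_eq]
  by_cases htt : t = t'
  · subst htt
    rw [hdist]
    have : |t - t| = 0 := by simp
    rw [this, max_eq_right (abs_nonneg _)]
    exact le_trans hple hdCd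
  · have hex : ∃ k, bitZ k t ≠ bitZ k t' := by
      by_contra hc
      push_neg at hc
      exact htt (eq_of_all_bits ht ht' hc)
    classical
    set n := Nat.find hex with hndef
    have hne : bitZ n t ≠ bitZ n t' := Nat.find_spec hex
    have hbits : ∀ k < n, bitZ k t = bitZ k t' := fun k hk =>
      not_not.1 (Nat.find_min hex hk)
    have habs_t : |t - t'| ≤ (1/2)^n := abs_t_le ht ht' n hbits
    set A : ℝ := ((n:ℝ)+1)^2 with hAdef
    have hA1 : (1:ℝ) ≤ A := by
      rw [hAdef]
      nlinarith [Nat.cast_nonneg (α := ℝ) n]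
    have hA0 : (0:ℝ) < A := by linarith
    have hsep : (1/2)^n / (8*A) ≤ |XX t p - XX t' p| := by
      rcases bitZ_cases n t with h0 | h0 <;> rcases bitZ_cases n t' with h1 | h1
      · exact absurd (h0.trans h1.symm) hne
      · have := XX_sep n hbits h0 h1 hp
        rw [abs_sub_comm]
        exact this.trans (le_abs_self _)
      · have := XX_sep n (fun k hk => (hbits k hk).symm) h1 h0 hp
        exact this.trans (le_abs_self _)
      · exact absurd (h0.trans h1.symm) hne
    have hX4 : |XX t p - XX t' p| ≤ 4 * d := by
      have htri := abs_sub_le (XX t p) (XX t' p') (XX t' p)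
      have hlip := XX_lip hp' hp t'
      have : |XX t' p' - XX t' p| ≤ 3 * |p - p'| := by
        rwa [abs_sub_comm (p') p] at hlip
      nlinarith
    have h2n : (1/2:ℝ)^n ≤ 32 * A * d := by
      have := hsep.trans hX4
      rw [div_le_iff₀ (by positivity)] at this
      nlinarith
    have hdpos : 0 < d := by
      by_contra hc
      push_neg at hc
      have : d = 0 := le_antisymm hc hd0
      rw [this] at h2n
      have : (0:ℝ) < (1/2:ℝ)^n := by positivity
      nlinarith
    have hhalfpos : (0:ℝ) < (1/2:ℝ)^n := by positivity
    have hsplit : ((1/2:ℝ))^n = ((1/2:ℝ)^n)^r * ((1/2:ℝ)^n)^(1-r) := by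
      rw [← Real.rpow_add hhalfpos]
      norm_num
    have hstep2 : ((1/2:ℝ)^n)^(1-r) = θ^n := by
      rw [← Real.rpow_natCast (1/2:ℝ) n, ← Real.rpow_mul (by norm_num : (0:ℝ) ≤ 1/2),
        hθdef, ← Real.rpow_natCast ((1/2:ℝ)^(1-r)) n, ← Real.rpow_mul (by norm_num : (0:ℝ) ≤ 1/2)]
      ring_nf
    have hstep1 : ((1/2:ℝ)^n)^r ≤ (32*A*d)^r :=
      Real.rpow_le_rpow hhalfpos.le h2n hr0.le
    have h32A : (32*A*d)^r ≤ 32*A*d^r := by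
      have e : (32*A*d)^r = (32*A)^r * d^r := Real.mul_rpow (by positivity) hd0
      have hb : (32*A)^r ≤ 32*A := by
        calc (32*A)^r ≤ (32*A)^(1:ℝ) :=
              Real.rpow_le_rpow_of_exponent_le (by linarith) hr1.le
          _ = 32*A := Real.rpow_one _
      rw [e]
      exact mul_le_mul_of_nonneg_right hb (Real.rpow_nonneg hd0 r)
    have htle : |t - t'| ≤ 32 * M * d ^ r := by
      calc |t - t'| ≤ (1/2:ℝ)^n := habs_t
        _ = ((1/2:ℝ)^n)^r * ((1/2:ℝ)^n)^(1-r) := hsplit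
        _ = ((1/2:ℝ)^n)^r * θ^n := by rw [hstep2]
        _ ≤ (32*A*d)^r * θ^n := mul_le_mul_of_nonneg_right hstep1 (by positivity)
        _ ≤ (32*A*d^r) * θ^n := mul_le_mul_of_nonneg_right h32A (by positivity)
        _ = 32 * (A * θ^n) * d^r := by ring
        _ ≤ 32 * M * d^r :=
            mul_le_mul_of_nonneg_right
              (by have := hM n; rw [hAdef]; nlinarith) (Real.rpow_nonneg hd0 r)
    rw [hdist]
    exact max_le htle (hple.trans hdCd)

lemma dimH_univ_prod : dimH (Set.univ : Set (ℝ × ℝ)) = 2 := by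
  rw [Real.dimH_univ_eq_finrank]
  rw [Module.finrank_prod, Module.finrank_self]
  norm_num

def Kset : Set (ℝ × ℝ) := {z : ℝ × ℝ | z ∈ Set.Icc (0 : ℝ) 1 ×ˢ Set.Icc (0 : ℝ) 1 ∧
      ∀ n : ℕ, g^[n] z ≠ (1 / 2, 1)}

lemma S_subset_K : Phi '' Dset ⊆ Kset := by
  rintro y ⟨⟨t, p⟩, ⟨⟨ht, hirr⟩, hp⟩, rfl⟩
  simp only [Set.mem_Icc, Set.mem_Ico] at hp ht
  obtain ⟨hp0, hp1⟩ : 0 < p ∧ p < 1 :=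
    ⟨lt_of_lt_of_le (by norm_num) hp.1, lt_of_le_of_lt hp.2 (by norm_num)⟩
  have hirr' : Irrational t := hirr
  have ht' : t ∈ Set.Ico (0:ℝ) 1 := Set.mem_Ico.2 ht
  constructor
  · rw [Set.mem_prod]
    constructor
    · show XX t p ∈ Set.Icc (0:ℝ) 1
      exact Set.mem_Icc.2 ⟨(XX_pos hp0 hp1 ht' hirr').le, (XX_lt_one hp0 hp1 ht' hirr').le⟩
    · show p ∈ Set.Icc (0:ℝ) 1
      exact Set.mem_Icc.2 ⟨by linarith [hp.1], by linarith [hp.2]⟩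
  · intro n hn
    have horb := g_orbit n t p ht' hirr' hp0 hp1
    rw [show Phi (t, p) = (XX t p, p) from rfl, horb] at hn
    have h2 := congrArg Prod.snd hn
    simp only [] at h2
    have hd : (0:ℝ) < 1 + (n:ℝ)*p := by positivity
    rw [div_eq_one_iff_eq hd.ne'] at h2
    nlinarith [Nat.cast_nonneg (α := ℝ) n]

lemma dimH_D : (2:ℝ≥0∞) ≤ dimH Dset := by
  have hcover : (Set.Icc (0:ℝ) 1 ×ˢ Set.Icc (1/2:ℝ) (3/4)) ⊆
      Dset ∪ ⋃ q : ℚ, (({((q:ℝ))} : Set ℝ) ×ˢ Set.Icc (1/2:ℝ) (3/4)) := by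
    rintro ⟨t, p⟩ ⟨ht, hp⟩
    simp only [Set.mem_Icc] at ht hp
    by_cases hirr : Irrational t
    · left
      refine ⟨⟨⟨ht.1, lt_of_le_of_ne ht.2 fun h => ?_⟩, hirr⟩, Set.mem_Icc.2 hp⟩
      exact hirr ⟨1, by rw [show t = 1 from h]; norm_num⟩
    · right
      obtain ⟨q, hq⟩ := not_not.1 hirr
      exact Set.mem_iUnion.2 ⟨q, ⟨by simp [hq], Set.mem_Icc.2 hp⟩⟩
  have hint : (interior (Set.Icc (0:ℝ) 1 ×ˢ Set.Icc (1/2:ℝ) (3/4))).Nonempty := by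
    rw [interior_prod_eq, interior_Icc, interior_Icc]
    exact ⟨(1/2, 3/5), by constructor <;> constructor <;> norm_num⟩
  have hbig : dimH (Set.Icc (0:ℝ) 1 ×ˢ Set.Icc (1/2:ℝ) (3/4)) = 2 := by
    rw [Real.dimH_of_nonempty_interior hint, Module.finrank_prod, Module.finrank_self]
    norm_num
  have hlines : dimH (⋃ q : ℚ, (({((q:ℝ))} : Set ℝ) ×ˢ Set.Icc (1/2:ℝ) (3/4))) ≤ 1 := by
    rw [dimH_iUnion]
    refine iSup_le fun q => ?_
    have hiso : Isometry (fun p : ℝ => ((q:ℝ), p)) := fun a b => by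
      rw [Prod.edist_eq]
      simp
    have himg : (({((q:ℝ))} : Set ℝ) ×ˢ Set.Icc (1/2:ℝ) (3/4))
        = (fun p : ℝ => ((q:ℝ), p)) '' (Set.Icc (1/2) (3/4)) := by
      ext ⟨a, b⟩
      simp only [Set.mem_prod, Set.mem_singleton_iff, Set.mem_image, Prod.mk.injEq]
      constructor
      · rintro ⟨rfl, hb⟩; exact ⟨b, hb, rfl, rfl⟩
      · rintro ⟨c, hc, rfl, rfl⟩; exact ⟨rfl, hc⟩
    rw [himg, hiso.dimH_image]
    calc dimH (Set.Icc (1/2:ℝ) (3/4)) ≤ dimH (Set.univ : Set ℝ) :=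
          dimH_mono (Set.subset_univ _)
      _ = 1 := Real.dimH_univ
  have h2 : (2:ℝ≥0∞) ≤ dimH (Dset ∪ ⋃ q : ℚ, (({((q:ℝ))} : Set ℝ) ×ˢ Set.Icc (1/2:ℝ) (3/4))) :=
    hbig ▸ dimH_mono hcover
  rw [dimH_union] at h2
  rcases le_max_iff.1 h2 with h | h
  · exact h
  · exfalso
    have := h.trans hlines
    norm_num at this

theorem sieving_nontypical_dimH_eq_two' : dimH Kset = 2 := by
  apply le_antisymm
  · calc dimH Kset ≤ dimH (Set.univ : Set (ℝ × ℝ)) := dimH_mono (Set.subset_univ _)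
      _ = 2 := dimH_univ_prod
  · by_contra hc
    have hlt : dimH Kset < 2 := lt_of_not_ge hc
    obtain ⟨x, hx1, hx2⟩ := ENNReal.lt_iff_exists_nnreal_btwn.1 hlt
    have hx0 : 0 < x := by
      by_contra hx0
      push_neg at hx0
      have : x = 0 := le_antisymm hx0 (by positivity)
      rw [this] at hx1
      simp at hx1
    set rn : ℝ≥0 := x / 2 with hrndef
    have hrn0 : 0 < rn := by positivity
    have hx2' : x < 2 := by
      have : (x:ℝ≥0∞) < ((2:ℝ≥0):ℝ≥0∞) := by simpa using hx2
      exact_mod_cast this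
    have hrnR0 : 0 < (rn:ℝ) := hrn0
    have hrnR1 : (rn:ℝ) < 1 := by
      rw [hrndef]
      push_cast
      have : (x:ℝ) < 2 := hx2'
      linarith
    obtain ⟨C, hC1, hest⟩ := key_est hrnR0 hrnR1
    set Ψ : ℝ × ℝ → ℝ × ℝ := Function.invFunOn Phi Dset with hΨdef
    have hinj : ∀ z ∈ Dset, ∀ z' ∈ Dset, Phi z = Phi z' → z = z' := by
      intro z hz z' hz' heq
      have := hest z z' hz hz'
      rw [heq, dist_self, Real.zero_rpow hrnR0.ne', mul_zero] at this
      exact dist_le_zero.1 this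
    have hΨPhi : ∀ z ∈ Dset, Ψ (Phi z) = z := by
      intro z hz
      have h1 : Phi (Ψ (Phi z)) = Phi z := Function.invFunOn_eq ⟨z, hz, rfl⟩
      have h2 : Ψ (Phi z) ∈ Dset := Function.invFunOn_mem ⟨z, hz, rfl⟩
      exact hinj _ h2 _ hz h1
    have hCN : (0:ℝ) ≤ C := by linarith
    have hHold : HolderOnWith C.toNNReal rn Ψ (Phi '' Dset) := by
      rintro y ⟨z, hz, rfl⟩ y' ⟨z', hz', rfl⟩
      rw [hΨPhi z hz, hΨPhi z' hz', edist_dist, edist_dist]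
      calc ENNReal.ofReal (dist z z')
          ≤ ENNReal.ofReal (C * dist (Phi z) (Phi z') ^ (rn:ℝ)) :=
            ENNReal.ofReal_le_ofReal (hest z z' hz hz')
        _ = ENNReal.ofReal C * ENNReal.ofReal (dist (Phi z) (Phi z') ^ (rn:ℝ)) :=
            ENNReal.ofReal_mul hCN
        _ = (C.toNNReal : ℝ≥0∞) * ENNReal.ofReal (dist (Phi z) (Phi z')) ^ (rn:ℝ) := by
            rw [ENNReal.ofReal_rpow_of_nonneg dist_nonneg hrnR0.le]
            rfl
    have hdim := hHold.dimH_image_le hrn0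
    have hsub : Dset ⊆ Ψ '' (Phi '' Dset) := by
      intro z hz
      exact ⟨Phi z, ⟨z, hz, rfl⟩, hΨPhi z hz⟩
    have hchain : (2:ℝ≥0∞) ≤ dimH (Phi '' Dset) / rn :=
      le_trans (le_trans dimH_D (dimH_mono hsub)) hdim
    have hmul : (2:ℝ≥0∞) * rn ≤ dimH (Phi '' Dset) :=
      (ENNReal.le_div_iff_mul_le (Or.inl (by exact_mod_cast hrn0.ne'))
        (Or.inl ENNReal.coe_ne_top)).1 hchain
    have h2rn : (2:ℝ≥0∞) * rn = (x : ℝ≥0∞) := by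
      rw [hrndef]
      rw [show ((x/2 : ℝ≥0) : ℝ≥0∞) = (x:ℝ≥0∞) / 2 by
        rw [ENNReal.coe_div (by norm_num)]; norm_num]
      rw [ENNReal.mul_div_cancel' (by norm_num) (by norm_num)]
    rw [h2rn] at hmul
    have : (x:ℝ≥0∞) ≤ dimH Kset := hmul.trans (dimH_mono S_subset_K)
    exact absurd hx1 (not_lt.2 this)

/-- The set `K₂` of points of the unit square never mapped to `s₂ = (1/2, 1)` by the
iterates of the sieving map `g` has Hausdorff dimension `2`. -/
theorem sieving_nontypical_dimH_eq_two :
    dimH {z : ℝ × ℝ | z ∈ Set.Icc (0 : ℝ) 1 ×ˢ Set.Icc (0 : ℝ) 1 ∧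
      ∀ n : ℕ, g^[n] z ≠ (1 / 2, 1)} = 2 :=
  sieving_nontypical_dimH_eq_two'
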